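/- Let V be a vector space over a field k and let L₀ be a fixed subspace. Then there exists a function d from the set of subspaces commensurable with L₀ to ℤ such that d(L') − d(L) = dim(L'/(L ∩ L')) − dim(L/(L ∩ L')) for all L, L' commensurable with L₀; moreover any two such functions differ by a constant integer. -/

import Mathlib

variable {k V : Type*} [Field k] [AddCommGroup V] [Module k V]

/-- Two subspaces are commensurable if their intersection has finite
codimension in each of them. -/
def Commensurable' (A B : Submodule k V) : Prop :=
  FiniteDimensional k (↥A ⧸ Submodule.comap A.subtype (A ⊓ B)) ∧
  FiniteDimensional k (↥B ⧸ Submodule.comap B.subtype (A ⊓ B))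

/-- The relative dimension `d(A,B) = dim(B/(A∩B)) − dim(A/(A∩B)) ∈ ℤ`. -/
noncomputable def relDim (A B : Submodule k V) : ℤ :=
  (Module.finrank k (↥B ⧸ Submodule.comap B.subtype (A ⊓ B)) : ℤ) -
  (Module.finrank k (↥A ⧸ Submodule.comap A.subtype (A ⊓ B)) : ℤ)

open Submodule Module

/-- If a submodule and the corresponding quotient are finite-dimensional,
so is the ambient space. -/
lemma FD.ext' {M : Type*} [AddCommGroup M] [Module k M] (S : Submodule k M)
    [FiniteDimensional k S] [FiniteDimensional k (M ⧸ S)] : FiniteDimensional k M := by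
  refine Module.rank_lt_aleph0_iff.mp ?_
  rw [← Submodule.rank_quotient_add_rank S]
  exact Cardinal.add_lt_aleph0 (Module.rank_lt_aleph0_iff.mpr ‹_›)
    (Module.rank_lt_aleph0_iff.mpr ‹_›)

lemma map_inf_mkQ (D A B : Submodule k V) (hB : D ≤ B) :
    Submodule.map D.mkQ (A ⊓ B) = Submodule.map D.mkQ A ⊓ Submodule.map D.mkQ B := by
  refine le_antisymm (le_inf (map_mono inf_le_left) (map_mono inf_le_right)) ?_
  rintro x ⟨hxa, hxb⟩
  obtain ⟨u, hu, rfl⟩ := hxa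
  obtain ⟨v, hv, hev⟩ := hxb
  have hd : v - u ∈ D := (Submodule.Quotient.eq D).mp (by simpa using hev)
  have hub : u ∈ B := by
    have := sub_mem hv (hB hd); simpa [sub_sub_cancel] using this
  exact ⟨u, ⟨hu, hub⟩, rfl⟩

lemma map_mkQ_self (D : Submodule k V) : Submodule.map D.mkQ D = ⊥ := by
  rw [eq_bot_iff]
  rintro x ⟨u, hu, rfl⟩
  simpa using (Submodule.Quotient.mk_eq_zero D).mpr hu

/-- Quotients of a subspace are preserved when passing to the ambient quotient `V ⧸ D`. -/
noncomputable def quotMapEquiv (D T B : Submodule k V) (hT : D ≤ T) :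
    (↥B ⧸ Submodule.comap B.subtype T) ≃ₗ[k]
      (↥(Submodule.map D.mkQ B) ⧸
        Submodule.comap (Submodule.map D.mkQ B).subtype (Submodule.map D.mkQ T)) := by
  set b := Submodule.map D.mkQ B with hb
  have hg : ∀ x : ↥B, (D.mkQ.comp B.subtype) x ∈ b := fun x => mem_map_of_mem x.2
  set g : ↥B →ₗ[k] ↥b := LinearMap.codRestrict b (D.mkQ.comp B.subtype) hg with hgdef
  set f := (Submodule.comap b.subtype (Submodule.map D.mkQ T)).mkQ.comp g with hf
  have hsurj : Function.Surjective f := by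
    apply Function.Surjective.comp (Submodule.mkQ_surjective _)
    rintro ⟨y, hy⟩
    obtain ⟨x, hx, rfl⟩ := hy
    exact ⟨⟨x, hx⟩, rfl⟩
  have hker : LinearMap.ker f = Submodule.comap B.subtype T := by
    ext x
    simp only [hf, LinearMap.mem_ker, LinearMap.comp_apply, mem_comap, subtype_apply]
    rw [← LinearMap.mem_ker, Submodule.ker_mkQ, mem_comap]
    show (g x : V ⧸ D) ∈ Submodule.map D.mkQ T ↔ (x : V) ∈ T
    constructor
    · rintro ⟨u, hu, huev⟩
      have hd : (x : V) - u ∈ D := (Submodule.Quotient.eq D).mp (by exact huev.symm)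
      have := add_mem hu (hT hd)
      simpa [add_sub_cancel] using this
    · intro hx
      exact ⟨x, hx, rfl⟩
  exact (Submodule.quotEquivOfEq _ _ hker.symm).trans (f.quotKerEquivOfSurjective hsurj)

/-- The relative dimension computed in an ambient quotient by a common subspace. -/
lemma relDim_eq_of_le (D A B : Submodule k V) (hA : D ≤ A) (hB : D ≤ B)
    [FiniteDimensional k ↥(Submodule.map D.mkQ A)]
    [FiniteDimensional k ↥(Submodule.map D.mkQ B)] :
    relDim A B = (Module.finrank k ↥(Submodule.map D.mkQ B) : ℤ) -
      (Module.finrank k ↥(Submodule.map D.mkQ A) : ℤ) := by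
  set a := Submodule.map D.mkQ A with ha
  set b := Submodule.map D.mkQ B with hb
  have hinf : Submodule.map D.mkQ (A ⊓ B) = a ⊓ b := map_inf_mkQ D A B hB
  have e1 := quotMapEquiv D (A ⊓ B) B (le_inf hA hB)
  have e2 := quotMapEquiv D (A ⊓ B) A (le_inf hA hB)
  rw [hinf] at e1 e2
  have h1 : Module.finrank k (↥B ⧸ Submodule.comap B.subtype (A ⊓ B)) =
      Module.finrank k (↥b ⧸ Submodule.comap b.subtype (a ⊓ b)) := e1.finrank_eq
  have h2 : Module.finrank k (↥A ⧸ Submodule.comap A.subtype (A ⊓ B)) =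
      Module.finrank k (↥a ⧸ Submodule.comap a.subtype (a ⊓ b)) := e2.finrank_eq
  have q1 := Submodule.finrank_quotient_add_finrank (Submodule.comap b.subtype (a ⊓ b))
  have q2 := Submodule.finrank_quotient_add_finrank (Submodule.comap a.subtype (a ⊓ b))
  have hc1 : Module.finrank k ↥(Submodule.comap b.subtype (a ⊓ b)) =
      Module.finrank k ↥(a ⊓ b) :=
    (Submodule.comapSubtypeEquivOfLe inf_le_right).finrank_eq
  have hc2 : Module.finrank k ↥(Submodule.comap a.subtype (a ⊓ b)) =
      Module.finrank k ↥(a ⊓ b) :=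
    (Submodule.comapSubtypeEquivOfLe inf_le_left).finrank_eq
  unfold relDim
  rw [h1, h2]
  omega

lemma comm_self (L₀ : Submodule k V) : Commensurable' L₀ L₀ := by
  have h : Submodule.comap L₀.subtype (L₀ ⊓ L₀) = ⊤ := by
    rw [inf_idem]; exact Submodule.comap_subtype_self L₀
  have hs : Subsingleton (↥L₀ ⧸ Submodule.comap L₀.subtype (L₀ ⊓ L₀)) :=
    (Submodule.Quotient.subsingleton_iff).mpr h
  have hfd : FiniteDimensional k (↥L₀ ⧸ Submodule.comap L₀.subtype (L₀ ⊓ L₀)) :=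
    Module.finite_of_rank_eq_zero (rank_subsingleton' _ _)
  exact ⟨hfd, hfd⟩

/-- A dimension theory on the commensurability class of a fixed subspace `L₀`
exists, and is unique up to adding a constant integer: dimension theories form
a `ℤ`-torsor. -/
theorem dimension_theory_exists_unique_up_to_constant (L₀ : Submodule k V) :
    (∃ d : Submodule k V → ℤ,
      ∀ L L' : Submodule k V, Commensurable' L L₀ → Commensurable' L' L₀ →
        d L' - d L = relDim L L') ∧
    (∀ d₁ d₂ : Submodule k V → ℤ,
      (∀ L L' : Submodule k V, Commensurable' L L₀ → Commensurable' L' L₀ →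
        d₁ L' - d₁ L = relDim L L') →
      (∀ L L' : Submodule k V, Commensurable' L L₀ → Commensurable' L' L₀ →
        d₂ L' - d₂ L = relDim L L') →
      ∃ c : ℤ, ∀ L : Submodule k V, Commensurable' L L₀ → d₁ L = d₂ L + c) := by
  constructor
  · refine ⟨fun L => relDim L₀ L, ?_⟩
    intro L L' hL hL'
    set D : Submodule k V := (L ⊓ L₀) ⊓ (L' ⊓ L₀) with hD
    have hDL : D ≤ L := inf_le_left.trans inf_le_left
    have hDL' : D ≤ L' := inf_le_right.trans inf_le_left
    have hD₀ : D ≤ L₀ := inf_le_left.trans inf_le_right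
    have hDLL₀ : D ≤ L ⊓ L₀ := inf_le_left
    have hDL'L₀ : D ≤ L' ⊓ L₀ := inf_le_right
    -- finite dimensionality of the images in V ⧸ D
    set S := Submodule.comap (Submodule.map D.mkQ L₀).subtype (Submodule.map D.mkQ (L ⊓ L₀)) with hS
    set T := Submodule.comap (Submodule.map D.mkQ L₀).subtype (Submodule.map D.mkQ (L' ⊓ L₀)) with hT
    haveI := hL.1
    haveI := hL.2
    haveI := hL'.1
    haveI := hL'.2
    haveI : FiniteDimensional k (↥(Submodule.map D.mkQ L₀) ⧸ S) :=
      (quotMapEquiv D (L ⊓ L₀) L₀ hDLL₀).finiteDimensional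
    haveI : FiniteDimensional k (↥(Submodule.map D.mkQ L₀) ⧸ T) :=
      (quotMapEquiv D (L' ⊓ L₀) L₀ hDL'L₀).finiteDimensional
    have hST : S ⊓ T = ⊥ := by
      rw [eq_bot_iff]
      rintro x ⟨hxS, hxT⟩
      have hx : (x : V ⧸ D) ∈ Submodule.map D.mkQ (L ⊓ L₀) ⊓ Submodule.map D.mkQ (L' ⊓ L₀) :=
        ⟨hxS, hxT⟩
      rw [← map_inf_mkQ D (L ⊓ L₀) (L' ⊓ L₀) hDL'L₀, ← hD, map_mkQ_self] at hx
      exact (Submodule.mem_bot _).mpr (Subtype.ext hx)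
    haveI f0 : FiniteDimensional k ↥(Submodule.map D.mkQ L₀) := by
      have hinj : Function.Injective (LinearMap.prod S.mkQ T.mkQ) := by
        rw [← LinearMap.ker_eq_bot, LinearMap.ker_prod, Submodule.ker_mkQ, Submodule.ker_mkQ, hST]
      exact FiniteDimensional.of_injective (LinearMap.prod S.mkQ T.mkQ) hinj
    haveI finfL : FiniteDimensional k ↥(Submodule.map D.mkQ (L ⊓ L₀)) :=
      Submodule.finiteDimensional_of_le (map_mono inf_le_right)
    haveI finfL' : FiniteDimensional k ↥(Submodule.map D.mkQ (L' ⊓ L₀)) :=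
      Submodule.finiteDimensional_of_le (map_mono inf_le_right)
    haveI fl : FiniteDimensional k ↥(Submodule.map D.mkQ L) := by
      haveI : FiniteDimensional k
          (↥(Submodule.map D.mkQ L) ⧸ Submodule.comap (Submodule.map D.mkQ L).subtype (Submodule.map D.mkQ (L ⊓ L₀))) :=
        (quotMapEquiv D (L ⊓ L₀) L hDLL₀).finiteDimensional
      haveI : FiniteDimensional k
          ↥(Submodule.comap (Submodule.map D.mkQ L).subtype (Submodule.map D.mkQ (L ⊓ L₀))) :=
        (Submodule.comapSubtypeEquivOfLe (map_mono inf_le_left)).symm.finiteDimensional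
      exact FD.ext' (Submodule.comap (Submodule.map D.mkQ L).subtype (Submodule.map D.mkQ (L ⊓ L₀)))
    haveI fl' : FiniteDimensional k ↥(Submodule.map D.mkQ L') := by
      haveI : FiniteDimensional k
          (↥(Submodule.map D.mkQ L') ⧸ Submodule.comap (Submodule.map D.mkQ L').subtype (Submodule.map D.mkQ (L' ⊓ L₀))) :=
        (quotMapEquiv D (L' ⊓ L₀) L' hDL'L₀).finiteDimensional
      haveI : FiniteDimensional k
          ↥(Submodule.comap (Submodule.map D.mkQ L').subtype (Submodule.map D.mkQ (L' ⊓ L₀))) :=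
        (Submodule.comapSubtypeEquivOfLe (map_mono inf_le_left)).symm.finiteDimensional
      exact FD.ext' (Submodule.comap (Submodule.map D.mkQ L').subtype (Submodule.map D.mkQ (L' ⊓ L₀)))
    show relDim L₀ L' - relDim L₀ L = relDim L L'
    rw [relDim_eq_of_le D L₀ L' hD₀ hDL', relDim_eq_of_le D L₀ L hD₀ hDL,
      relDim_eq_of_le D L L' hDL hDL']
    ring
  · intro d₁ d₂ h₁ h₂
    refine ⟨d₁ L₀ - d₂ L₀, ?_⟩
    intro L hLc
    have e1 := h₁ L₀ L (comm_self L₀) hLc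
    have e2 := h₂ L₀ L (comm_self L₀) hLc
    omega
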